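/- arXiv:1612.03234 — 2 statements merged into one kernel-verified Lean document; each statement's English description precedes it below -/
import Mathlib

section
/- Let Q be a qplex and let f : Q → Q be a bijective isometry of Q onto itself (i.e. ‖f(q₁) − f(q₂)‖ = ‖q₁ − q₂‖ for all q₁, q₂ ∈ Q). Then there exists an orthogonal d²×d² matrix R with Rc = c and RQ = Q such that f(q) = Rq for all q ∈ Q. Hence the symmetry group of Q coincides with its preservation group, the group of orthogonal matrices R satisfying Rc = c and RQ = Q. -/
noncomputable section

/- Ambient space: ℝ^(d²) with the standard inner product. -/
abbrev V (d : ℕ) := EuclideanSpace ℝ (Fin (d^2))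

/-- The standard inner product ⟨u, v⟩ = ∑ i, u i * v i. -/
def ip {d : ℕ} (u v : V d) : ℝ := inner ℝ u v

/-- The barycenter c, with all entries equal to 1/d². -/
def cpt (d : ℕ) : V d := WithLp.toLp 2 (fun _ => 1/(d^2:ℝ))

/-- The hyperplane H = {u : ⟨u, c⟩ = 1/d²} of vectors whose entries sum to 1. -/
def Hs (d : ℕ) : Set (V d) := {u | ip u (cpt d) = 1/(d^2:ℝ)}

/-- The polar A* = {u ∈ H : ⟨u, v⟩ ≥ 1/(d(d+1)) for all v ∈ A}. -/
def polar (d : ℕ) (A : Set (V d)) : Set (V d) :=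
  {u | u ∈ Hs d ∧ ∀ v ∈ A, 1/((d:ℝ)*((d:ℝ)+1)) ≤ ip u v}

/-- cc(A): the closed convex hull of A. -/
def cc (d : ℕ) (A : Set (V d)) : Set (V d) := closure (convexHull ℝ A)

/-- The probability simplex Δ = {u ∈ H : u i ≥ 0 for all i}. -/
def probSimplex (d : ℕ) : Set (V d) := {u | u ∈ Hs d ∧ ∀ i, 0 ≤ u i}

/-- The basis distributions e_k, with e_k(i) = (δ_{ki} + 1/d)/(d+1). -/
def basisDist (d : ℕ) (k : Fin (d^2)) : V d :=
  WithLp.toLp 2 (fun i => ((if k = i then (1:ℝ) else 0) + 1/(d:ℝ)) / ((d:ℝ)+1))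

/-- The basis simplex Δ_e: the convex hull of the basis distributions. -/
def basisSimplex (d : ℕ) : Set (V d) := convexHull ℝ (Set.range (basisDist d))

/-- The out-ball B_o = {u ∈ H : ⟨u, u⟩ ≤ 2/(d(d+1))}. -/
def outBall (d : ℕ) : Set (V d) := {u | u ∈ Hs d ∧ ip u u ≤ 2/((d:ℝ)*((d:ℝ)+1))}

/-- The out-sphere S_o = {u ∈ H : ⟨u, u⟩ = 2/(d(d+1))}. -/
def outSphere (d : ℕ) : Set (V d) := {u | u ∈ Hs d ∧ ip u u = 2/((d:ℝ)*((d:ℝ)+1))}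

/-- The in-ball B_i = {u ∈ H : ‖u − c‖² ≤ 1/(d²(d²−1))}. -/
def inBall (d : ℕ) : Set (V d) :=
  {u | u ∈ Hs d ∧ ‖u - cpt d‖^2 ≤ 1/((d:ℝ)^2*((d:ℝ)^2-1))}

/-- The in-sphere S_i = {u ∈ H : ‖u − c‖² = 1/(d²(d²−1))}. -/
def inSphere (d : ℕ) : Set (V d) :=
  {u | u ∈ Hs d ∧ ‖u - cpt d‖^2 = 1/((d:ℝ)^2*((d:ℝ)^2-1))}

/-- The mid-ball B_m = {u ∈ H : ‖u − c‖² ≤ 1/(d²(d+1))}. -/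
def midBall (d : ℕ) : Set (V d) :=
  {u | u ∈ Hs d ∧ ‖u - cpt d‖^2 ≤ 1/((d:ℝ)^2*((d:ℝ)+1))}

/-- A germ: a subset of Δ whose pairwise inner products satisfy the
fundamental inequalities 1/(d(d+1)) ≤ ⟨p, s⟩ ≤ 2/(d(d+1)). -/
def IsGerm (d : ℕ) (G : Set (V d)) : Prop :=
  G ⊆ probSimplex d ∧
  ∀ p ∈ G, ∀ s ∈ G, 1/((d:ℝ)*((d:ℝ)+1)) ≤ ip p s ∧ ip p s ≤ 2/((d:ℝ)*((d:ℝ)+1))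

/-- A qplex: a self-polar subset of Δ ∩ B_o. -/
def IsQplex (d : ℕ) (Q : Set (V d)) : Prop :=
  Q ⊆ probSimplex d ∩ outBall d ∧ Q = polar d Q

/-- Action of a d²×d² matrix on a vector: (R u)(i) = ∑ j, R i j * u j. -/
def mvec (d : ℕ) (R : Matrix (Fin (d^2)) (Fin (d^2)) ℝ) (u : V d) : V d :=
  WithLp.toLp 2 (fun i => ∑ j, R i j * u j)

namespace S16
variable {d : ℕ}

lemma ip_eq (u v : V d) : ip u v = ∑ i, u i * v i := by
  simp [ip, PiLp.inner_apply, RCLike.inner_apply, mul_comm]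

lemma ip_comm (u v : V d) : ip u v = ip v u := real_inner_comm v u

lemma dpos (hd : 2 ≤ d) : (0:ℝ) < d := by
  have : (2:ℝ) ≤ (d:ℝ) := by exact_mod_cast hd
  linarith

lemma vsum_apply {ι : Type*} (s : Finset ι) (w : ι → V d) (i : Fin (d^2)) :
    (∑ k ∈ s, w k) i = ∑ k ∈ s, w k i := by
  induction s using Finset.cons_induction with
  | empty => rfl
  | cons a s ha ih => rw [Finset.sum_cons, Finset.sum_cons, ← ih]; rfl

lemma single_sum (u : V d) : ∑ j, u j • EuclideanSpace.single j (1:ℝ) = u := by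
  ext i
  rw [vsum_apply]
  simp [PiLp.smul_apply, EuclideanSpace.single_apply]

lemma ip_cpt_right (u : V d) : ip u (cpt d) = (∑ i, u i) / (d:ℝ)^2 := by
  rw [ip_eq, Finset.sum_div]
  simp [cpt, div_eq_mul_inv]

lemma mem_Hs_iff (hd : 2 ≤ d) {u : V d} : u ∈ Hs d ↔ ∑ i, u i = 1 := by
  have h2 : (0:ℝ) < (d:ℝ)^2 := by have := dpos hd; positivity
  rw [Hs, Set.mem_setOf_eq, ip_cpt_right, div_eq_div_iff (ne_of_gt h2) (ne_of_gt h2)]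
  constructor <;> intro h <;> nlinarith [h, h2]

lemma sum_ite_one (k : Fin (d^2)) : ∑ i, (if k = i then (1:ℝ) else 0) = 1 := by
  simp

lemma sum_basisDist (hd : 2 ≤ d) (k : Fin (d^2)) : ∑ i, basisDist d k i = 1 := by
  have hdpos := dpos hd
  unfold basisDist
  rw [← Finset.sum_div, Finset.sum_add_distrib, sum_ite_one, Finset.sum_const]
  simp only [Finset.card_univ, Fintype.card_fin, nsmul_eq_mul]
  push_cast
  field_simp
  ring

lemma ip_basisDist (hd : 2 ≤ d) (u : V d) (k : Fin (d^2)) :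
    ip u (basisDist d k) = (u k + (∑ i, u i)/(d:ℝ))/((d:ℝ)+1) := by
  have hdpos := dpos hd
  have hd1 : (0:ℝ) < (d:ℝ)+1 := by linarith
  rw [ip_eq]
  have h : ∀ i, u i * basisDist d k i
      = (if k = i then u i else 0)/((d:ℝ)+1) + u i * (1/((d:ℝ)*((d:ℝ)+1))) := by
    intro i
    unfold basisDist
    split <;> (field_simp; try ring) <;> simp [*]
  rw [Finset.sum_congr rfl (fun i _ => h i), Finset.sum_add_distrib]
  rw [← Finset.sum_div, Finset.sum_ite_eq, ← Finset.sum_mul]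
  simp only [Finset.mem_univ, if_true]
  field_simp

lemma ip_basisDist_self (hd : 2 ≤ d) (k : Fin (d^2)) :
    ip (basisDist d k) (basisDist d k) = 2/((d:ℝ)*((d:ℝ)+1)) := by
  have hdpos := dpos hd
  have hd1 : (0:ℝ) < (d:ℝ)+1 := by linarith
  rw [ip_basisDist hd, sum_basisDist hd]
  have : basisDist d k k = (1 + 1/(d:ℝ))/((d:ℝ)+1) := by unfold basisDist; simp
  rw [this]
  field_simp
  ring

lemma sum_ip_basisDist (hd : 2 ≤ d) (u : V d) (hu : ∑ i, u i = 1) :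
    ∑ k, ip u (basisDist d k) = 1 := by
  have hdpos := dpos hd
  have hd1 : (0:ℝ) < (d:ℝ)+1 := by linarith
  rw [Finset.sum_congr rfl (fun k _ => ip_basisDist hd u k)]
  rw [hu, ← Finset.sum_div, Finset.sum_add_distrib, Finset.sum_const]
  rw [hu]
  simp only [Finset.card_univ, Fintype.card_fin, nsmul_eq_mul]
  push_cast
  field_simp
  ring

lemma cpt_mem_Hs (hd : 2 ≤ d) : cpt d ∈ Hs d := by
  rw [mem_Hs_iff hd]
  have h2 : (0:ℝ) < (d:ℝ)^2 := by have := dpos hd; positivity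
  simp [cpt]
  field_simp

lemma expand_sub (u v : V d) : ip (u-v) (u-v) = ip u u - 2*(ip u v) + ip v v := by
  have h := inner_sub_sub_self (𝕜 := ℝ) u v
  have hc := real_inner_comm u v
  unfold ip
  rw [h, hc]; ring

lemma linIndep_basisDist (hd : 2 ≤ d) : LinearIndependent ℝ (basisDist d) := by
  have hdpos := dpos hd
  have hd1 : (0:ℝ) < (d:ℝ)+1 := by linarith
  rw [Fintype.linearIndependent_iff]
  intro g hg
  have hpt : ∀ i : Fin (d^2), g i = -(∑ k, g k)/(d:ℝ) := by
    intro i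
    have h : (∑ k, g k • basisDist d k) i = (0 : V d) i := by rw [hg]
    rw [vsum_apply] at h
    simp only [PiLp.smul_apply, smul_eq_mul] at h
    have h2 : ∀ k, g k * basisDist d k i
        = (if k = i then g k else 0)/((d:ℝ)+1) + g k * (1/((d:ℝ)*((d:ℝ)+1))) := by
      intro k
      unfold basisDist
      split <;> (field_simp; try ring) <;> simp [*]
    rw [Finset.sum_congr rfl (fun k _ => h2 k), Finset.sum_add_distrib,
      ← Finset.sum_div, Finset.sum_ite_eq', ← Finset.sum_mul] at h
    simp only [Finset.mem_univ, if_true] at h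
    have h0 : (0 : V d) i = 0 := rfl
    rw [h0] at h
    field_simp at h ⊢
    have h' : (g i * (d:ℝ) + ∑ k, g k) * ((d:ℝ)+1) = 0 := by linear_combination ((d:ℝ)+1) * h
    rcases mul_eq_zero.mp h' with h3 | h3
    · linarith
    · linarith
  have hs : ∑ k, g k = 0 := by
    have h := Finset.sum_congr rfl (fun i (_ : i ∈ Finset.univ) => hpt i)
    rw [Finset.sum_const, Finset.card_univ, Fintype.card_fin, nsmul_eq_mul] at h
    push_cast at h
    have hdn : (d:ℝ) ≠ 0 := ne_of_gt hdpos
    have heq : (d:ℝ)^2 * (-(∑ k, g k)/(d:ℝ)) = -((d:ℝ) * (∑ k, g k)) := by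
      field_simp
    rw [heq] at h
    have h2 : (∑ k, g k) * (1 + (d:ℝ)) = 0 := by linear_combination h
    rcases mul_eq_zero.mp h2 with h3 | h3
    · exact h3
    · linarith
  intro i
  rw [hpt i, hs]
  simp

end S16

/-- every bijective isometry of a qplex onto itself is the
restriction of an orthogonal matrix fixing c and preserving Q. -/
theorem statement16 (d : ℕ) (hd : 2 ≤ d) (Q : Set (V d)) (hQ : IsQplex d Q)
    (f : V d → V d) (hbij : Set.BijOn f Q Q)
    (hiso : ∀ q₁ ∈ Q, ∀ q₂ ∈ Q, ‖f q₁ - f q₂‖ = ‖q₁ - q₂‖) :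
    ∃ R : Matrix (Fin (d^2)) (Fin (d^2)) ℝ,
      R ∈ Matrix.orthogonalGroup (Fin (d^2)) ℝ ∧
      mvec d R (cpt d) = cpt d ∧
      mvec d R '' Q = Q ∧
      ∀ q ∈ Q, f q = mvec d R q := by
  classical
  obtain ⟨hQsub, hQpol⟩ := hQ
  have hdpos := S16.dpos hd
  have hd1 : (0:ℝ) < (d:ℝ)+1 := by linarith
  have hd2 : (0:ℝ) < (d:ℝ)^2 := by positivity
  have hQsum : ∀ v ∈ Q, ∑ i, v i = 1 := fun v hv =>
    (S16.mem_Hs_iff hd).mp (hQsub hv).1.1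
  have hQpos : ∀ v ∈ Q, ∀ i, 0 ≤ v i := fun v hv => (hQsub hv).1.2
  have hQout : ∀ v ∈ Q, ip v v ≤ 2/((d:ℝ)*((d:ℝ)+1)) := fun v hv => (hQsub hv).2.2
  have hip_cpt : ∀ v ∈ Q, ip v (cpt d) = 1/(d:ℝ)^2 := by
    intro v hv; rw [S16.ip_cpt_right, hQsum v hv]
  have hcc : ip (cpt d) (cpt d) = 1/(d:ℝ)^2 := by
    rw [S16.ip_cpt_right]
    rw [(S16.mem_Hs_iff hd).mp (S16.cpt_mem_Hs hd)]
  have hcQ : cpt d ∈ Q := by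
    rw [hQpol]
    refine ⟨S16.cpt_mem_Hs hd, fun v hv => ?_⟩
    rw [S16.ip_comm, hip_cpt v hv]
    rw [div_le_div_iff₀ (by positivity) hd2]
    nlinarith
  have heQ : ∀ k, basisDist d k ∈ Q := by
    intro k
    rw [hQpol]
    refine ⟨(S16.mem_Hs_iff hd).mpr (S16.sum_basisDist hd k), fun v hv => ?_⟩
    rw [S16.ip_comm, S16.ip_basisDist hd v k, hQsum v hv]
    have h1 : 1/((d:ℝ)*((d:ℝ)+1)) = (1/(d:ℝ))/((d:ℝ)+1) := by field_simp
    rw [h1]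
    have := hQpos v hv k
    gcongr
    linarith
  -- f fixes the barycenter
  have hfc : f (cpt d) = cpt d := by
    set x := f (cpt d) with hxdef
    have hxQ : x ∈ Q := hbij.mapsTo hcQ
    have hxsum : ∑ i, x i = 1 := hQsum x hxQ
    have hb : ∀ k, ip x x - 2*(ip x (basisDist d k)) + 2/((d:ℝ)*((d:ℝ)+1))
        ≤ 2/((d:ℝ)*((d:ℝ)+1)) - 1/(d:ℝ)^2 := by
      intro k
      obtain ⟨q, hqQ, hfq⟩ := hbij.surjOn (heQ k)
      have hdist : ‖x - basisDist d k‖ = ‖cpt d - q‖ := by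
        rw [← hfq]; exact hiso _ hcQ _ hqQ
      have hsq : ip (x - basisDist d k) (x - basisDist d k)
          = ip (cpt d - q) (cpt d - q) := by
        show (inner ℝ _ _ : ℝ) = inner ℝ _ _
        rw [real_inner_self_eq_norm_sq, real_inner_self_eq_norm_sq, hdist]
      rw [S16.expand_sub, S16.expand_sub] at hsq
      have h1 : ip (cpt d) q = 1/(d:ℝ)^2 := by
        rw [S16.ip_comm]; exact hip_cpt q hqQ
      have h2 := hQout q hqQ
      rw [S16.ip_basisDist_self hd, hcc, h1] at hsq
      linarith
    have hsumb := Finset.sum_le_sum (fun k (_ : k ∈ Finset.univ) => hb k)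
    rw [Finset.sum_const, Finset.card_univ, Fintype.card_fin, nsmul_eq_mul] at hsumb
    rw [Finset.sum_add_distrib, Finset.sum_sub_distrib, Finset.sum_const,
      Finset.sum_const, ← Finset.mul_sum, S16.sum_ip_basisDist hd x hxsum] at hsumb
    simp only [Finset.card_univ, Fintype.card_fin, nsmul_eq_mul, smul_eq_mul] at hsumb
    push_cast at hsumb
    have hkey : ((d:ℝ)^2) * (2/((d:ℝ)*((d:ℝ)+1)) - 1/(d:ℝ)^2)
        - ((d:ℝ)^2) * (2/((d:ℝ)*((d:ℝ)+1))) = -1 := by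
      field_simp
      ring
    have hxx : ip x x ≤ 1/(d:ℝ)^2 := by
      rw [div_eq_mul_inv, le_mul_inv_iff₀ hd2, mul_comm]
      linarith [hsumb, hkey]
    have hxc : ip (x - cpt d) (x - cpt d) ≤ 0 := by
      rw [S16.expand_sub, hcc, hip_cpt x hxQ]
      linarith
    have hxc0 : ip (x - cpt d) (x - cpt d) = 0 :=
      le_antisymm hxc real_inner_self_nonneg
    exact sub_eq_zero.mp (inner_self_eq_zero.mp hxc0)
  -- norms preserved
  have hnorm : ∀ q ∈ Q, ip (f q) (f q) = ip q q := by
    intro q hq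
    have hfqQ : f q ∈ Q := hbij.mapsTo hq
    have hdist : ‖f q - cpt d‖ = ‖q - cpt d‖ := by
      conv_lhs => rw [← hfc]
      exact hiso _ hq _ hcQ
    have hsq : ip (f q - cpt d) (f q - cpt d) = ip (q - cpt d) (q - cpt d) := by
      show (inner ℝ _ _ : ℝ) = inner ℝ _ _
      rw [real_inner_self_eq_norm_sq, real_inner_self_eq_norm_sq, hdist]
    rw [S16.expand_sub, S16.expand_sub, hip_cpt q hq, hip_cpt (f q) hfqQ] at hsq
    linarith
  -- inner products preserved
  have hpres : ∀ q₁ ∈ Q, ∀ q₂ ∈ Q, ip (f q₁) (f q₂) = ip q₁ q₂ := by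
    intro q₁ hq₁ q₂ hq₂
    have hsq : ip (f q₁ - f q₂) (f q₁ - f q₂) = ip (q₁ - q₂) (q₁ - q₂) := by
      show (inner ℝ _ _ : ℝ) = inner ℝ _ _
      rw [real_inner_self_eq_norm_sq, real_inner_self_eq_norm_sq, hiso _ hq₁ _ hq₂]
    rw [S16.expand_sub, S16.expand_sub, hnorm q₁ hq₁, hnorm q₂ hq₂] at hsq
    linarith
  -- the linear map
  haveI : Nonempty (Fin (d^2)) := ⟨⟨0, by positivity⟩⟩
  have hcard : Fintype.card (Fin (d^2)) = Module.finrank ℝ (V d) := by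
    simp [finrank_euclideanSpace_fin]
  set b : Module.Basis (Fin (d^2)) ℝ (V d) :=
    basisOfLinearIndependentOfCardEqFinrank (S16.linIndep_basisDist hd) hcard with hbdef
  have hbcoe : ∀ k, b k = basisDist d k := fun k =>
    congrFun (coe_basisOfLinearIndependentOfCardEqFinrank _ _) k
  set L : V d →ₗ[ℝ] V d := b.constr ℝ (fun k => f (basisDist d k)) with hLdef
  have hLb : ∀ k, L (basisDist d k) = f (basisDist d k) := by
    intro k
    have h := b.constr_basis ℝ (fun k => f (basisDist d k)) k
    rw [hbcoe k] at h
    exact h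
  have hrepr : ∀ u : V d, ∑ k, b.repr u k • basisDist d k = u := by
    intro u
    conv_rhs => rw [← b.sum_repr u]
    exact Finset.sum_congr rfl (fun k _ => by rw [hbcoe k])
  have hLrepr : ∀ u : V d, L u = ∑ k, b.repr u k • f (basisDist d k) := by
    intro u
    conv_lhs => rw [← hrepr u]
    rw [map_sum]
    exact Finset.sum_congr rfl (fun k _ => by rw [map_smul, hLb k])
  have hbil : ∀ (a c : Fin (d^2) → ℝ) (w z : Fin (d^2) → V d),
      ip (∑ j, a j • w j) (∑ k, c k • z k)
        = ∑ j, ∑ k, a j * c k * ip (w j) (z k) := by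
    intro a c w z
    unfold ip
    rw [sum_inner]
    refine Finset.sum_congr rfl (fun j _ => ?_)
    rw [inner_sum]
    refine Finset.sum_congr rfl (fun k _ => ?_)
    rw [real_inner_smul_left, real_inner_smul_right]
    ring
  have hL : ∀ u v : V d, ip (L u) (L v) = ip u v := by
    intro u v
    rw [hLrepr u, hLrepr v, hbil]
    calc ∑ j, ∑ k, b.repr u j * b.repr v k
            * ip (f (basisDist d j)) (f (basisDist d k))
        = ∑ j, ∑ k, b.repr u j * b.repr v k * ip (basisDist d j) (basisDist d k) := by
          refine Finset.sum_congr rfl fun j _ => Finset.sum_congr rfl fun k _ => ?_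
          rw [hpres _ (heQ j) _ (heQ k)]
      _ = ip (∑ j, b.repr u j • basisDist d j) (∑ k, b.repr v k • basisDist d k) :=
          (hbil _ _ _ _).symm
      _ = ip u v := by rw [hrepr u, hrepr v]
  have horth : ∀ x : V d, (∀ k, ip x (basisDist d k) = 0) → x = 0 := by
    intro x hx
    have h1 : ip x (∑ k, b.repr x k • basisDist d k)
        = ∑ k, b.repr x k * ip x (basisDist d k) := by
      unfold ip
      rw [inner_sum]
      exact Finset.sum_congr rfl fun k _ => real_inner_smul_right _ _ _
    have h2 : ip x x = 0 := by
      nth_rewrite 2 [← hrepr x]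
      rw [h1]
      simp [hx]
    exact inner_self_eq_zero.mp h2
  have hinj : Function.Injective L := by
    intro u v huv
    have h0 : ip (u - v) (u - v) = 0 := by
      rw [← hL, map_sub, huv, sub_self]
      simp [ip]
    exact sub_eq_zero.mp (inner_self_eq_zero.mp h0)
  have hsurj : Function.Surjective L := LinearMap.injective_iff_surjective.mp hinj
  have horthL : ∀ w : V d, (∀ k, ip w (f (basisDist d k)) = 0) → w = 0 := by
    intro w hw
    obtain ⟨x, rfl⟩ := hsurj w
    have hx : ∀ k, ip x (basisDist d k) = 0 := by
      intro k
      have h := hw k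
      rw [← hLb k, hL] at h
      exact h
    rw [horth x hx, map_zero]
  have hfL : ∀ q ∈ Q, f q = L q := by
    intro q hq
    have h0 : f q - L q = 0 := by
      apply horthL
      intro k
      have h1 : ip (f q) (f (basisDist d k)) = ip q (basisDist d k) :=
        hpres _ hq _ (heQ k)
      have h2 : ip (L q) (f (basisDist d k)) = ip q (basisDist d k) := by
        rw [← hLb k, hL]
      unfold ip at h1 h2 ⊢
      rw [inner_sub_left, h1, h2, sub_self]
    exact sub_eq_zero.mp h0
  have hLc : L (cpt d) = cpt d := by rw [← hfL (cpt d) hcQ, hfc]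
  -- the matrix
  set R : Matrix (Fin (d^2)) (Fin (d^2)) ℝ :=
    fun i j => L (EuclideanSpace.single j (1:ℝ)) i with hRdef
  have hmvec : ∀ u : V d, mvec d R u = L u := by
    intro u
    ext i
    show ∑ j, R i j * u j = L u i
    conv_rhs => rw [← S16.single_sum u, map_sum]
    rw [S16.vsum_apply]
    refine Finset.sum_congr rfl (fun j _ => ?_)
    rw [map_smul]
    show R i j * u j = (u j • L (EuclideanSpace.single j 1)) i
    rw [PiLp.smul_apply, smul_eq_mul, mul_comm]
  refine ⟨R, ?_, ?_, ?_, ?_⟩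
  · rw [Matrix.mem_orthogonalGroup_iff']
    ext j k
    rw [Matrix.mul_apply, Matrix.one_apply]
    have h1 : ∀ i, R.transpose j i * R i k
        = L (EuclideanSpace.single j 1) i * L (EuclideanSpace.single k 1) i := by
      intro i
      rfl
    rw [Finset.sum_congr rfl fun i _ => h1 i,
      show ∑ i, L (EuclideanSpace.single j 1) i * L (EuclideanSpace.single k 1) i
        = ip (L (EuclideanSpace.single j 1)) (L (EuclideanSpace.single k 1)) from
        (S16.ip_eq _ _).symm,
      hL, S16.ip_eq]
    simp only [EuclideanSpace.single_apply, mul_ite, mul_one, mul_zero,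
      Finset.sum_ite_eq, Finset.mem_univ, if_true]
    by_cases h : j = k
    · simp [h]
    · simp [h, Ne.symm h]
  · rw [hmvec, hLc]
  · rw [Set.image_congr (fun q hq => by rw [hmvec, ← hfL q hq] : ∀ q ∈ Q, mvec d R q = f q)]
    exact hbij.image_eq
  · intro q hq
    rw [hmvec, hfL q hq]
end
end

section
/- Let 𝒢 be a stochastic subgroup of the orthogonal group O(d²), i.e. a subgroup such that every R ∈ 𝒢 satisfies R_{ij} ≥ −1/d for all i, j and Rc = c. Then there exists a qplex Q such that RQ = Q for all R ∈ 𝒢; that is, 𝒢 is contained in the preservation group of some qplex. -/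
noncomputable section

/-- A stochastic subgroup of O(d²): every element has all entries ≥ −1/d and
fixes the barycenter c. -/
def IsStochasticSubgroup (d : ℕ)
    (𝒢 : Subgroup (Matrix.orthogonalGroup (Fin (d^2)) ℝ)) : Prop :=
  ∀ R ∈ 𝒢,
    (∀ i j, -(1/(d:ℝ)) ≤ (R : Matrix (Fin (d^2)) (Fin (d^2)) ℝ) i j) ∧
    mvec d (R : Matrix (Fin (d^2)) (Fin (d^2)) ℝ) (cpt d) = cpt d

/-! ### Auxiliary definitions -/

/-- Matrix type shorthand. -/
abbrev Mx (d : ℕ) := Matrix (Fin (d^2)) (Fin (d^2)) ℝ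

/-- Orthogonal group shorthand. -/
abbrev OG (d : ℕ) := Matrix.orthogonalGroup (Fin (d^2)) ℝ

/-- Squared radius of the mid-ball. -/
def rm2 (d : ℕ) : ℝ := 1/((d:ℝ)^2*((d:ℝ)+1))

/-- Squared radius of the out-ball (around the barycenter). -/
def ro2 (d : ℕ) : ℝ := ((d:ℝ)-1)/((d:ℝ)^2*((d:ℝ)+1))

/-- Squared radius of the in-ball. -/
def ri2 (d : ℕ) : ℝ := 1/((d:ℝ)^2*((d:ℝ)^2-1))

/-! ### Basic facts about `ip` -/

lemma ip_apply {d : ℕ} (u v : V d) : ip u v = ∑ i, u i * v i := by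
  simp [ip, PiLp.inner_apply, RCLike.inner_apply, starRingEnd_apply, mul_comm]

lemma ip_comm {d : ℕ} (u v : V d) : ip u v = ip v u := real_inner_comm v u

lemma ip_self_nonneg {d : ℕ} (u : V d) : 0 ≤ ip u u := real_inner_self_nonneg

lemma ip_self_eq_zero {d : ℕ} {u : V d} : ip u u = 0 ↔ u = 0 := inner_self_eq_zero

lemma ip_cs_sq {d : ℕ} (u v : V d) : (ip u v)^2 ≤ ip u u * ip v v := by
  have := real_inner_mul_inner_self_le u v
  simpa [ip, sq] using this

/-- Cauchy–Schwarz in interval form. -/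
lemma ip_bounds {d : ℕ} {x y : V d} {a b e : ℝ}
    (hx : ip x x ≤ a) (hy : ip y y ≤ b) (hab : a * b ≤ e^2) (he : 0 ≤ e) :
    -e ≤ ip x y ∧ ip x y ≤ e := by
  have h1 := ip_cs_sq x y
  have h2 := ip_self_nonneg x
  have h3 := ip_self_nonneg y
  constructor <;> nlinarith [sq_nonneg (ip x y + e), sq_nonneg (ip x y - e)]

lemma ip_add_left {d : ℕ} (u v w : V d) : ip (u + v) w = ip u w + ip v w :=
  inner_add_left u v w

lemma ip_add_right {d : ℕ} (u v w : V d) : ip u (v + w) = ip u v + ip u w :=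
  inner_add_right u v w

lemma ip_sub_left {d : ℕ} (u v w : V d) : ip (u - v) w = ip u w - ip v w :=
  inner_sub_left u v w

lemma ip_sub_right {d : ℕ} (u v w : V d) : ip u (v - w) = ip u v - ip u w :=
  inner_sub_right u v w

lemma ip_smul_left {d : ℕ} (t : ℝ) (u v : V d) : ip (t • u) v = t * ip u v :=
  real_inner_smul_left u v t

lemma ip_smul_right {d : ℕ} (t : ℝ) (u v : V d) : ip u (t • v) = t * ip u v :=
  real_inner_smul_right u v t

lemma ip_norm_sq {d : ℕ} (u : V d) : ‖u‖^2 = ip u u :=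
  (real_inner_self_eq_norm_sq u).symm
/-! ### Numeric helpers -/

lemma D_two {d : ℕ} (hd : 2 ≤ d) : (2:ℝ) ≤ (d:ℝ) := by exact_mod_cast hd

lemma D_pos {d : ℕ} (hd : 2 ≤ d) : (0:ℝ) < (d:ℝ) := by have := D_two hd; linarith

lemma rm2_pos {d : ℕ} (hd : 2 ≤ d) : 0 < rm2 d := by
  have := D_two hd; unfold rm2; positivity

lemma ro2_pos {d : ℕ} (hd : 2 ≤ d) : 0 < ro2 d := by
  have h := D_two hd; unfold ro2
  apply div_pos <;> nlinarith

lemma ri2_pos {d : ℕ} (hd : 2 ≤ d) : 0 < ri2 d := by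
  have h := D_two hd; unfold ri2
  apply div_pos; · norm_num
  · apply mul_pos (by positivity); nlinarith

lemma lb_eq {d : ℕ} (hd : 2 ≤ d) : 1/((d:ℝ)*((d:ℝ)+1)) = 1/(d:ℝ)^2 - rm2 d := by
  have h := D_two hd; unfold rm2; field_simp; ring

lemma ub_eq {d : ℕ} (hd : 2 ≤ d) : 2/((d:ℝ)*((d:ℝ)+1)) = 1/(d:ℝ)^2 + ro2 d := by
  have h := D_two hd; unfold ro2; field_simp; ring

lemma ri2_mul_ro2 {d : ℕ} (hd : 2 ≤ d) : ri2 d * ro2 d = (rm2 d)^2 := by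
  have h := D_two hd; unfold ri2 ro2 rm2
  have h1 : (d:ℝ)^2 - 1 = ((d:ℝ)-1)*((d:ℝ)+1) := by ring
  rw [h1]
  have h2 : (d:ℝ) - 1 ≠ 0 := by nlinarith
  have h3 : (d:ℝ) + 1 ≠ 0 := by nlinarith
  have h4 : (d:ℝ) ≠ 0 := by nlinarith
  field_simp

lemma ri2_le_rm2 {d : ℕ} (hd : 2 ≤ d) : ri2 d ≤ rm2 d := by
  have h := D_two hd; unfold ri2 rm2
  have h4 : (0:ℝ) < (d:ℝ)^2*((d:ℝ)+1) := by positivity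
  apply div_le_div_of_nonneg_left (by norm_num) h4
  nlinarith

lemma rm2_le_ro2 {d : ℕ} (hd : 2 ≤ d) : rm2 d ≤ ro2 d := by
  have h := D_two hd; unfold rm2 ro2
  apply div_le_div_of_nonneg_right ?_ (by nlinarith)
  · linarith

lemma ri2_le_ro2 {d : ℕ} (hd : 2 ≤ d) : ri2 d ≤ ro2 d :=
  le_trans (ri2_le_rm2 hd) (rm2_le_ro2 hd)

/-! ### The hyperplane -/

lemma cpt_apply {d : ℕ} (i : Fin (d^2)) : cpt d i = 1/(d:ℝ)^2 := rfl

lemma ip_cpt_eq_sum {d : ℕ} (hd : 2 ≤ d) (u : V d) :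
    ip u (cpt d) = (∑ i, u i) / (d:ℝ)^2 := by
  rw [ip_apply, Finset.sum_div]
  apply Finset.sum_congr rfl
  intro i _
  rw [cpt_apply]; ring

lemma hs_sum {d : ℕ} (hd : 2 ≤ d) {u : V d} : u ∈ Hs d ↔ ∑ i, u i = 1 := by
  have hD := D_pos hd
  have h2 : ((d:ℝ)^2) ≠ 0 := by positivity
  constructor
  · intro h
    have h' : ip u (cpt d) = 1/(d:ℝ)^2 := h
    rw [ip_cpt_eq_sum hd] at h'
    field_simp at h'
    exact h'
  · intro h
    show ip u (cpt d) = 1/(d:ℝ)^2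
    rw [ip_cpt_eq_sum hd, h]

lemma ip_cpt {d : ℕ} {u : V d} (hu : u ∈ Hs d) : ip u (cpt d) = 1/(d:ℝ)^2 := hu

lemma cpt_mem_Hs {d : ℕ} (hd : 2 ≤ d) : cpt d ∈ Hs d := by
  rw [hs_sum hd]
  have h2 : ((d:ℝ)^2) ≠ 0 := by have := D_pos hd; positivity
  simp [cpt_apply, Finset.sum_const, Finset.card_univ]
  push_cast
  field_simp

lemma ip_cpt_cpt {d : ℕ} (hd : 2 ≤ d) : ip (cpt d) (cpt d) = 1/(d:ℝ)^2 :=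
  ip_cpt (cpt_mem_Hs hd)

/-- Center shift: for u, v ∈ H, ⟨u−c, v−c⟩ = ⟨u,v⟩ − 1/d². -/
lemma ip_center {d : ℕ} (hd : 2 ≤ d) {u v : V d} (hu : u ∈ Hs d) (hv : v ∈ Hs d) :
    ip (u - cpt d) (v - cpt d) = ip u v - 1/(d:ℝ)^2 := by
  rw [ip_sub_left, ip_sub_right, ip_sub_right]
  rw [ip_cpt hu, ip_comm (cpt d) v, ip_cpt hv, ip_cpt_cpt hd]
  ring

/-- ⟨u−c, c⟩ = 0 for u ∈ H. -/
lemma ip_center_cpt {d : ℕ} (hd : 2 ≤ d) {u : V d} (hu : u ∈ Hs d) :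
    ip (u - cpt d) (cpt d) = 0 := by
  rw [ip_sub_left, ip_cpt hu, ip_cpt_cpt hd]; ring
/-! ### Matrix action -/

lemma mvec_eq_mulVec {d : ℕ} (R : Mx d) (u : V d) : mvec d R u = R.mulVec u := rfl

lemma mvec_mvec {d : ℕ} (A B : Mx d) (u : V d) :
    mvec d A (mvec d B u) = mvec d (A*B) u := by
  ext i
  show (A.mulVec (B.mulVec u)) i = ((A*B).mulVec u) i
  rw [Matrix.mulVec_mulVec]

lemma mvec_one {d : ℕ} (u : V d) : mvec d 1 u = u := by
  ext i
  show ((1 : Mx d).mulVec u) i = u i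
  rw [Matrix.one_mulVec]

lemma mvec_add {d : ℕ} (R : Mx d) (u v : V d) :
    mvec d R (u + v) = mvec d R u + mvec d R v := by
  ext i
  show (R.mulVec (u + v)) i = (R.mulVec u + R.mulVec v) i
  rw [Matrix.mulVec_add]

lemma mvec_sub {d : ℕ} (R : Mx d) (u v : V d) :
    mvec d R (u - v) = mvec d R u - mvec d R v := by
  ext i
  show (R.mulVec (u - v)) i = (R.mulVec u - R.mulVec v) i
  rw [Matrix.mulVec_sub R u v]

lemma mvec_smul {d : ℕ} (R : Mx d) (t : ℝ) (u : V d) :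
    mvec d R (t • u) = t • mvec d R u := by
  ext i
  show (R.mulVec (t • u)) i = (t • R.mulVec u) i
  rw [Matrix.mulVec_smul]

lemma ip_mvec_star {d : ℕ} (R : Mx d) (u v : V d) :
    ip (mvec d R u) v = ip u (mvec d (star R) v) := by
  simp only [ip_apply, mvec, Matrix.star_apply, star_trivial, Finset.sum_mul, Finset.mul_sum]
  rw [Finset.sum_comm]
  congr 1; ext i; congr 1; ext j; ring

/-! ### Orthogonal group elements -/

section Orth

variable {d : ℕ}

lemma og_inv_coe (R : OG d) : ((R⁻¹ : OG d) : Mx d) = star (R : Mx d) := rfl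

lemma og_mul_coe (R S : OG d) : ((R * S : OG d) : Mx d) = (R : Mx d) * (S : Mx d) := rfl

lemma og_star_mul_self (R : OG d) : star (R : Mx d) * (R : Mx d) = 1 := R.2.1

lemma og_mul_self_star (R : OG d) : (R : Mx d) * star (R : Mx d) = 1 := R.2.2

lemma ip_mvec_inv (R : OG d) (u v : V d) :
    ip (mvec d (R : Mx d) u) v = ip u (mvec d ((R⁻¹ : OG d) : Mx d) v) := by
  rw [og_inv_coe]; exact ip_mvec_star _ _ _

lemma ip_mvec_mvec (R : OG d) (u v : V d) :
    ip (mvec d (R : Mx d) u) (mvec d (R : Mx d) v) = ip u v := by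
  rw [ip_mvec_inv, mvec_mvec, og_inv_coe, og_star_mul_self, mvec_one]

/-- Entries of an orthogonal matrix are at most 1. -/
lemma og_entry_le_one (R : OG d) (i j : Fin (d^2)) : (R : Mx d) i j ≤ 1 := by
  have h : ∑ k, (R : Mx d) i k * (R : Mx d) i k = 1 := by
    have h1 := og_mul_self_star R
    have h2 : ((R : Mx d) * star (R : Mx d)) i i = (1 : Mx d) i i := by rw [h1]
    rw [Matrix.mul_apply, Matrix.one_apply_eq] at h2
    simpa [Matrix.star_apply] using h2
  have h3 : (R : Mx d) i j * (R : Mx d) i j ≤ 1 := by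
    rw [← h]
    exact Finset.single_le_sum (f := fun k => (R : Mx d) i k * (R : Mx d) i k)
      (fun k _ => mul_self_nonneg _) (Finset.mem_univ j)
  nlinarith

end Orth

/-! ### Stochastic subgroup facts -/

section Stoch

variable {d : ℕ} {𝒢 : Subgroup (OG d)}

lemma sg_cpt (hst : IsStochasticSubgroup d 𝒢) {R : OG d} (hR : R ∈ 𝒢) :
    mvec d (R : Mx d) (cpt d) = cpt d := (hst R hR).2

lemma sg_entry_lb (hst : IsStochasticSubgroup d 𝒢) {R : OG d} (hR : R ∈ 𝒢)
    (i j : Fin (d^2)) : -(1/(d:ℝ)) ≤ (R : Mx d) i j := (hst R hR).1 i j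

lemma sg_hs (hd : 2 ≤ d) (hst : IsStochasticSubgroup d 𝒢) {R : OG d} (hR : R ∈ 𝒢)
    {u : V d} (hu : u ∈ Hs d) : mvec d (R : Mx d) u ∈ Hs d := by
  show ip (mvec d (R : Mx d) u) (cpt d) = 1/(d^2:ℝ)
  rw [ip_mvec_inv, sg_cpt hst (𝒢.inv_mem hR)]
  exact ip_cpt hu

lemma sg_rowsum (hd : 2 ≤ d) (hst : IsStochasticSubgroup d 𝒢) {R : OG d} (hR : R ∈ 𝒢)
    (i : Fin (d^2)) : ∑ j, (R : Mx d) i j = 1 := by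
  have h := sg_cpt hst hR
  have h2 : mvec d (R : Mx d) (cpt d) i = cpt d i := by rw [h]
  have h3 : ∑ j, (R : Mx d) i j * (1/(d:ℝ)^2) = 1/(d:ℝ)^2 := h2
  have hD : ((d:ℝ)^2) ≠ 0 := by have := D_pos hd; positivity
  rw [← Finset.sum_mul] at h3
  field_simp at h3
  exact h3

lemma sg_colsum (hd : 2 ≤ d) (hst : IsStochasticSubgroup d 𝒢) {R : OG d} (hR : R ∈ 𝒢)
    (j : Fin (d^2)) : ∑ i, (R : Mx d) i j = 1 := by
  have h := sg_rowsum hd hst (𝒢.inv_mem hR) j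
  rw [og_inv_coe] at h
  simpa [Matrix.star_apply] using h

/-- For u ∈ H in the polar-style situation: ⟨Rx, c⟩ = 0 when Σx = 0. -/
lemma sg_ip_center_cpt (hd : 2 ≤ d) (hst : IsStochasticSubgroup d 𝒢) {R : OG d} (hR : R ∈ 𝒢)
    {u : V d} (hu : u ∈ Hs d) :
    ip (mvec d (R : Mx d) (u - cpt d)) (cpt d) = 0 := by
  rw [ip_mvec_inv, sg_cpt hst (𝒢.inv_mem hR)]
  exact ip_center_cpt hd hu

end Stoch
/-! ### Basis distributions -/

section Basis

variable {d : ℕ}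

lemma e_apply (k i : Fin (d^2)) :
    basisDist d k i = ((if k = i then (1:ℝ) else 0) + 1/(d:ℝ)) / ((d:ℝ)+1) := rfl

lemma e_mem_Hs (hd : 2 ≤ d) (k : Fin (d^2)) : basisDist d k ∈ Hs d := by
  rw [hs_sum hd]
  have hD := D_pos hd
  have h1 : ∑ i, basisDist d k i
      = ((∑ i, if k = i then (1:ℝ) else 0) + (∑ _i : Fin (d^2), 1/(d:ℝ))) / ((d:ℝ)+1) := by
    rw [← Finset.sum_add_distrib, Finset.sum_div]
    rfl
  rw [h1, Finset.sum_ite_eq, if_pos (Finset.mem_univ k)]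
  simp [Finset.sum_const, Finset.card_univ]
  push_cast
  field_simp
  ring

lemma e_mem_probSimplex (hd : 2 ≤ d) (k : Fin (d^2)) : basisDist d k ∈ probSimplex d := by
  refine ⟨e_mem_Hs hd k, fun i => ?_⟩
  rw [e_apply]
  have hD := D_pos hd
  apply div_nonneg ?_ (by linarith)
  split <;> [skip; skip] <;> positivity

/-- For w ∈ H: ⟨e_k, w⟩ = (w k + 1/d)/(d+1). -/
lemma ip_e (hd : 2 ≤ d) {w : V d} (hw : w ∈ Hs d) (k : Fin (d^2)) :
    ip (basisDist d k) w = (w k + 1/(d:ℝ)) / ((d:ℝ)+1) := by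
  have hD := D_pos hd
  have hsum := (hs_sum hd).mp hw
  rw [ip_apply]
  have h1 : ∀ i, basisDist d k i * w i
      = ((if k = i then w i else 0) + (1/(d:ℝ)) * w i) / ((d:ℝ)+1) := by
    intro i
    rw [e_apply]
    by_cases h : k = i <;> simp [h] <;> ring
  rw [Finset.sum_congr rfl (fun i _ => h1 i)]
  rw [← Finset.sum_div, Finset.sum_add_distrib, Finset.sum_ite_eq, if_pos (Finset.mem_univ k),
    ← Finset.mul_sum, hsum]
  ring

/-- Entry formula for the action on e_k of a stochastic orthogonal matrix. -/
lemma mvec_e_apply {𝒢 : Subgroup (OG d)} (hd : 2 ≤ d) (hst : IsStochasticSubgroup d 𝒢)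
    {T : OG d} (hT : T ∈ 𝒢) (k j : Fin (d^2)) :
    mvec d (T : Mx d) (basisDist d k) j = ((T : Mx d) j k + 1/(d:ℝ)) / ((d:ℝ)+1) := by
  have hD := D_pos hd
  have hrow := sg_rowsum hd hst hT j
  show ∑ i, (T : Mx d) j i * basisDist d k i = _
  have h1 : ∀ i, (T : Mx d) j i * basisDist d k i
      = ((if k = i then (T : Mx d) j i else 0) + (1/(d:ℝ)) * (T : Mx d) j i) / ((d:ℝ)+1) := by
    intro i
    rw [e_apply]
    by_cases h : k = i <;> simp [h] <;> ring
  rw [Finset.sum_congr rfl (fun i _ => h1 i)]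
  rw [← Finset.sum_div, Finset.sum_add_distrib, Finset.sum_ite_eq, if_pos (Finset.mem_univ k),
    ← Finset.mul_sum, hrow]
  ring

/-- The action of a stochastic orthogonal matrix on basis distributions lands in Δ. -/
lemma mvec_e_mem_probSimplex {𝒢 : Subgroup (OG d)} (hd : 2 ≤ d)
    (hst : IsStochasticSubgroup d 𝒢) {T : OG d} (hT : T ∈ 𝒢) (k : Fin (d^2)) :
    mvec d (T : Mx d) (basisDist d k) ∈ probSimplex d := by
  refine ⟨sg_hs hd hst hT (e_mem_Hs hd k), fun i => ?_⟩
  rw [mvec_e_apply hd hst hT]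
  have hD := D_pos hd
  have h1 := sg_entry_lb hst hT i k
  apply div_nonneg ?_ (by linarith)
  have : (0:ℝ) ≤ (T : Mx d) i k + 1/(d:ℝ) := by linarith
  linarith

/-- ⟨e_j, T e_k⟩ bounds for a stochastic orthogonal T. -/
lemma ip_e_mvec_e_bounds {𝒢 : Subgroup (OG d)} (hd : 2 ≤ d)
    (hst : IsStochasticSubgroup d 𝒢) {T : OG d} (hT : T ∈ 𝒢) (j k : Fin (d^2)) :
    1/((d:ℝ)*((d:ℝ)+1)) ≤ ip (basisDist d j) (mvec d (T : Mx d) (basisDist d k)) ∧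
    ip (basisDist d j) (mvec d (T : Mx d) (basisDist d k)) ≤ 2/((d:ℝ)*((d:ℝ)+1)) := by
  have hD := D_two hd
  have hw : mvec d (T : Mx d) (basisDist d k) ∈ Hs d := sg_hs hd hst hT (e_mem_Hs hd k)
  rw [ip_e hd hw, mvec_e_apply hd hst hT]
  have h1 := sg_entry_lb hst hT j k
  have h2 := og_entry_le_one T j k
  have hDpos : (0:ℝ) < (d:ℝ) := by linarith
  have h3 : (((T : Mx d) j k + 1/(d:ℝ))/((d:ℝ)+1) + 1/(d:ℝ))/((d:ℝ)+1)
      = ((d:ℝ)*(T : Mx d) j k + 2 + (d:ℝ))/((d:ℝ)*((d:ℝ)+1)^2) := by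
    field_simp
    ring
  rw [h3]
  have h1' : -(1:ℝ) ≤ (d:ℝ) * (T : Mx d) j k := by
    have := mul_le_mul_of_nonneg_left h1 hDpos.le
    calc -(1:ℝ) = (d:ℝ) * -(1/(d:ℝ)) := by field_simp
    _ ≤ _ := this
  have h2' : (d:ℝ) * (T : Mx d) j k ≤ (d:ℝ) := by
    have := mul_le_mul_of_nonneg_left h2 hDpos.le
    simpa using this
  have hq : (0:ℝ) ≤ (d:ℝ)*((d:ℝ)+1) := by positivity
  constructor
  · rw [div_le_div_iff₀ (by nlinarith) (by positivity)]
    nlinarith [mul_le_mul_of_nonneg_right h1' hq]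
  · rw [div_le_div_iff₀ (by positivity) (by nlinarith)]
    nlinarith [mul_le_mul_of_nonneg_right h2' hq]

end Basis
/-! ### Centered computations -/

section Centered

variable {d : ℕ}

lemma e_centered (hd : 2 ≤ d) (k : Fin (d^2)) :
    ip (basisDist d k - cpt d) (basisDist d k - cpt d) = ro2 d := by
  have hD := D_two hd
  have hDpos : (0:ℝ) < (d:ℝ) := by linarith
  rw [ip_center hd (e_mem_Hs hd k) (e_mem_Hs hd k), ip_e hd (e_mem_Hs hd k) k, e_apply]
  rw [if_pos rfl]
  unfold ro2
  field_simp
  ring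

lemma sg_centered {𝒢 : Subgroup (OG d)} (hst : IsStochasticSubgroup d 𝒢)
    {R : OG d} (hR : R ∈ 𝒢) (u : V d) :
    mvec d (R : Mx d) u - cpt d = mvec d (R : Mx d) (u - cpt d) := by
  rw [mvec_sub, sg_cpt hst hR]

lemma sg_centered_ip {𝒢 : Subgroup (OG d)} (hst : IsStochasticSubgroup d 𝒢)
    {R : OG d} (hR : R ∈ 𝒢) (u v : V d) :
    ip (mvec d (R : Mx d) u - cpt d) (mvec d (R : Mx d) v - cpt d)
      = ip (u - cpt d) (v - cpt d) := by
  rw [sg_centered hst hR, sg_centered hst hR, ip_mvec_mvec]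

/-- Pair bounds from centered second moments multiplying to at most rm2². -/
lemma pair_both (hd : 2 ≤ d) {u v : V d} (hu : u ∈ Hs d) (hv : v ∈ Hs d) {a b : ℝ}
    (hu2 : ip (u - cpt d) (u - cpt d) ≤ a) (hv2 : ip (v - cpt d) (v - cpt d) ≤ b)
    (hab : a * b ≤ (rm2 d)^2) :
    1/((d:ℝ)*((d:ℝ)+1)) ≤ ip u v ∧ ip u v ≤ 2/((d:ℝ)*((d:ℝ)+1)) := by
  have h := ip_bounds hu2 hv2 hab (rm2_pos hd).le
  have hc := ip_center hd hu hv
  have h1 := lb_eq hd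
  have h2 := ub_eq hd
  have h3 := rm2_le_ro2 hd
  constructor <;> linarith [h.1, h.2]

/-- Upper pair bound from both centered moments at most ro2. -/
lemma pair_ub (hd : 2 ≤ d) {u v : V d} (hu : u ∈ Hs d) (hv : v ∈ Hs d)
    (hu2 : ip (u - cpt d) (u - cpt d) ≤ ro2 d) (hv2 : ip (v - cpt d) (v - cpt d) ≤ ro2 d) :
    ip u v ≤ 2/((d:ℝ)*((d:ℝ)+1)) := by
  have h := ip_bounds hu2 hv2 (le_of_eq (sq (ro2 d)).symm) (ro2_pos hd).le
  have hc := ip_center hd hu hv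
  have h2 := ub_eq hd
  linarith [h.2]

end Centered

/-! ### The in-ball -/

section InBall

variable {d : ℕ}

lemma inBall_center {v : V d} (hv : v ∈ inBall d) :
    ip (v - cpt d) (v - cpt d) ≤ ri2 d := by
  rw [← ip_norm_sq]
  exact hv.2

lemma cpt_mem_inBall (hd : 2 ≤ d) : cpt d ∈ inBall d := by
  refine ⟨cpt_mem_Hs hd, ?_⟩
  rw [sub_self, norm_zero]
  have h := (ri2_pos hd).le
  unfold ri2 at h
  calc ((0:ℝ))^2 = 0 := by norm_num
  _ ≤ _ := h

lemma inBall_sub_probSimplex (hd : 2 ≤ d) : inBall d ⊆ probSimplex d := by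
  intro v hv
  refine ⟨hv.1, fun k => ?_⟩
  have hD := D_two hd
  have hDpos : (0:ℝ) < (d:ℝ) := by linarith
  obtain ⟨x, hx⟩ : ∃ x : V d, x = v - cpt d := ⟨_, rfl⟩
  have hxk : x k = v k - 1/(d:ℝ)^2 := by
    rw [hx]; simp [cpt_apply]
  have hS : ∑ i, x i = 0 := by
    have h1 : ∑ i, x i = (∑ i, v i) - ∑ i, cpt d i := by
      simp [hx, Finset.sum_sub_distrib]
    have h2 := (hs_sum hd).mp hv.1
    have h3 := (hs_sum hd).mp (cpt_mem_Hs hd)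
    rw [h1, h2, h3]; ring
  have hx2 : ∑ i, (x i)^2 ≤ ri2 d := by
    have h1 := inBall_center hv
    rw [ip_apply, ← hx] at h1
    calc ∑ i, (x i)^2 = ∑ i, x i * x i := by apply Finset.sum_congr rfl; intro i _; ring
    _ ≤ ri2 d := h1
  -- Cauchy–Schwarz on the complement of k
  have hmem := Finset.mem_univ k
  have hcs := Finset.sum_mul_sq_le_sq_mul_sq (Finset.univ.erase k) x (fun _ => (1:ℝ))
  have hsum_erase : ∑ i ∈ Finset.univ.erase k, x i = -x k := by
    rw [Finset.sum_erase_eq_sub hmem, hS]; ring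
  have hsq_erase : ∑ i ∈ Finset.univ.erase k, (x i)^2 = (∑ i, (x i)^2) - (x k)^2 := by
    rw [Finset.sum_erase_eq_sub hmem]
  have hcard : ((Finset.univ.erase k).card : ℝ) = (d:ℝ)^2 - 1 := by
    rw [Finset.card_erase_of_mem hmem, Finset.card_univ, Fintype.card_fin]
    have h1 : 1 ≤ d^2 := Nat.one_le_pow 2 d (by omega)
    push_cast [Nat.cast_sub h1]
    ring
  have hone : ∑ _i ∈ Finset.univ.erase k, ((1:ℝ))^2 = (d:ℝ)^2 - 1 := by
    rw [Finset.sum_const]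
    rw [nsmul_eq_mul, ← hcard]
    ring
  simp only [mul_one] at hcs
  rw [hsum_erase, hsq_erase, hone] at hcs
  -- hcs : (-x k)^2 ≤ ((∑ x²) - x k²) * (D² - 1)
  have hri : ri2 d = 1/((d:ℝ)^2*((d:ℝ)^2-1)) := rfl
  have hD21 : (0:ℝ) < (d:ℝ)^2 - 1 := by nlinarith
  -- conclude x k ≥ -1/D², hence v k ≥ 0
  by_contra hneg
  push_neg at hneg
  obtain ⟨q, hqdef⟩ : ∃ q : ℝ, q = 1/(d:ℝ)^2 := ⟨_, rfl⟩
  obtain ⟨X, hXdef⟩ : ∃ X : ℝ, X = (x k)^2 := ⟨_, rfl⟩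
  obtain ⟨S2, hS2def⟩ : ∃ S2 : ℝ, S2 = ∑ i, (x i)^2 := ⟨_, rfl⟩
  have hqpos : 0 < q := by rw [hqdef]; positivity
  have hD2pos : (0:ℝ) < (d:ℝ)^2 := by positivity
  have hxkneg : x k < -q := by
    rw [hqdef, hxk]
    have : (0:ℝ) < 1/(d:ℝ)^2 := by positivity
    linarith
  have hq' : q < -x k := by linarith
  have hxk2 : q^2 < X := by
    rw [hXdef]
    calc q^2 = q*q := sq q
    _ < (-x k) * (-x k) := mul_lt_mul'' hq' hq' hqpos.le hqpos.le
    _ = (x k)^2 := by ring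
  have h4 : (0:ℝ) ≤ (d:ℝ)^2 - 1 := by nlinarith
  have hcs' : X ≤ (S2 - X) * ((d:ℝ)^2 - 1) := by
    rw [hXdef, hS2def]
    calc (x k)^2 = (-x k)^2 := by ring
    _ ≤ _ := hcs
  have hx2' : S2 ≤ ri2 d := by rw [hS2def]; exact hx2
  have h5 : (S2 - X) * ((d:ℝ)^2 - 1) ≤ (ri2 d - X) * ((d:ℝ)^2 - 1) :=
    mul_le_mul_of_nonneg_right (by linarith) h4
  have he : (ri2 d - X) * ((d:ℝ)^2 - 1) = q - ((d:ℝ)^2 - 1)*X := by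
    rw [hri, hqdef]
    have hne : ((d:ℝ)^2 - 1) ≠ 0 := by nlinarith
    field_simp
  have hchain2 : (d:ℝ)^2 * X ≤ q := by
    rw [he] at h5
    have h6 : X + ((d:ℝ)^2 - 1)*X ≤ q := by linarith
    have h7 : (d:ℝ)^2*X = X + ((d:ℝ)^2-1)*X := by ring
    linarith
  have he2 : (d:ℝ)^2 * q^2 = q := by rw [hqdef]; field_simp
  have := mul_lt_mul_of_pos_left hxk2 hD2pos
  linarith

end InBall
/-! ### The seed germ and the family of invariant germs -/

/-- The 𝒢-orbit of the basis distributions. -/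
def orbE (d : ℕ) (𝒢 : Subgroup (OG d)) : Set (V d) :=
  {w | ∃ R ∈ 𝒢, ∃ k, w = mvec d (R : Mx d) (basisDist d k)}

/-- The seed: in-ball together with the orbit of the basis distributions. -/
def G0 (d : ℕ) (𝒢 : Subgroup (OG d)) : Set (V d) := inBall d ∪ orbE d 𝒢

/-- The family of 𝒢-invariant germs containing the seed. -/
def Fam (d : ℕ) (𝒢 : Subgroup (OG d)) : Set (Set (V d)) :=
  {M | IsGerm d M ∧ G0 d 𝒢 ⊆ M ∧ ∀ R ∈ 𝒢, ∀ u ∈ M, mvec d (R : Mx d) u ∈ M}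

section Seed

variable {d : ℕ} {𝒢 : Subgroup (OG d)}

lemma orbE_hs (hd : 2 ≤ d) (hst : IsStochasticSubgroup d 𝒢) {w : V d}
    (hw : w ∈ orbE d 𝒢) : w ∈ Hs d := by
  obtain ⟨R, hR, k, rfl⟩ := hw
  exact sg_hs hd hst hR (e_mem_Hs hd k)

lemma orbE_centered (hd : 2 ≤ d) (hst : IsStochasticSubgroup d 𝒢) {w : V d}
    (hw : w ∈ orbE d 𝒢) : ip (w - cpt d) (w - cpt d) = ro2 d := by
  obtain ⟨R, hR, k, rfl⟩ := hw
  rw [sg_centered_ip hst hR]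
  exact e_centered hd k

lemma orbE_probSimplex (hd : 2 ≤ d) (hst : IsStochasticSubgroup d 𝒢) {w : V d}
    (hw : w ∈ orbE d 𝒢) : w ∈ probSimplex d := by
  obtain ⟨R, hR, k, rfl⟩ := hw
  exact mvec_e_mem_probSimplex hd hst hR k

lemma ip_orbE_orbE (hd : 2 ≤ d) (hst : IsStochasticSubgroup d 𝒢) {p w : V d}
    (hp : p ∈ orbE d 𝒢) (hw : w ∈ orbE d 𝒢) :
    1/((d:ℝ)*((d:ℝ)+1)) ≤ ip p w ∧ ip p w ≤ 2/((d:ℝ)*((d:ℝ)+1)) := by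
  obtain ⟨R, hR, j, rfl⟩ := hp
  obtain ⟨S, hS, k, rfl⟩ := hw
  have h : ip (mvec d (R : Mx d) (basisDist d j)) (mvec d (S : Mx d) (basisDist d k))
      = ip (basisDist d j) (mvec d ((R⁻¹*S : OG d) : Mx d) (basisDist d k)) := by
    rw [ip_mvec_inv, mvec_mvec, og_mul_coe]
  rw [h]
  exact ip_e_mvec_e_bounds hd hst (mul_mem (inv_mem hR) hS) j k

lemma G0_mem_Fam (hd : 2 ≤ d) (hst : IsStochasticSubgroup d 𝒢) : G0 d 𝒢 ∈ Fam d 𝒢 := by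
  have hri2 := ri2_pos hd
  have hrm2 := rm2_pos hd
  refine ⟨⟨?_, ?_⟩, le_refl _, ?_⟩
  · -- inside simplex
    rintro p (hp | hp)
    · exact inBall_sub_probSimplex hd hp
    · exact orbE_probSimplex hd hst hp
  · -- pair bounds
    rintro p (hp | hp) w (hw | hw)
    · exact pair_both hd hp.1 hw.1 (inBall_center hp) (inBall_center hw)
        (by nlinarith [ri2_le_rm2 hd])
    · exact pair_both hd hp.1 (orbE_hs hd hst hw) (inBall_center hp)
        (le_of_eq (orbE_centered hd hst hw)) (le_of_eq (ri2_mul_ro2 hd))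
    · exact pair_both hd (orbE_hs hd hst hp) hw.1
        (le_of_eq (orbE_centered hd hst hp)) (inBall_center hw)
        (by rw [mul_comm]; exact le_of_eq (ri2_mul_ro2 hd))
    · exact ip_orbE_orbE hd hst hp hw
  · -- invariance
    rintro R hR u (hu | hu)
    · left
      refine ⟨sg_hs hd hst hR hu.1, ?_⟩
      have h1 : ‖mvec d (R : Mx d) u - cpt d‖^2
          = ip (u - cpt d) (u - cpt d) := by
        rw [ip_norm_sq, sg_centered_ip hst hR]
      rw [h1]
      exact inBall_center hu
    · right
      obtain ⟨S, hS, k, rfl⟩ := hu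
      exact ⟨R * S, mul_mem hR hS, k, by rw [mvec_mvec, og_mul_coe]⟩

end Seed

/-! ### Polar facts -/

section PolarFacts

variable {d : ℕ} {𝒢 : Subgroup (OG d)}

lemma polar_invariant (hd : 2 ≤ d) (hst : IsStochasticSubgroup d 𝒢) {M : Set (V d)}
    (hM : M ∈ Fam d 𝒢) {R : OG d} (hR : R ∈ 𝒢) {u : V d} (hu : u ∈ polar d M) :
    mvec d (R : Mx d) u ∈ polar d M := by
  refine ⟨sg_hs hd hst hR hu.1, fun v hv => ?_⟩
  rw [ip_mvec_inv]
  exact hu.2 _ (hM.2.2 R⁻¹ (inv_mem hR) v hv)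

/-- Polar points lie within radius ro2 of the barycenter. -/
lemma polar_center_le_ro2 (hd : 2 ≤ d) (hst : IsStochasticSubgroup d 𝒢) {M : Set (V d)}
    (hM : M ∈ Fam d 𝒢) {u : V d} (hu : u ∈ polar d M) :
    ip (u - cpt d) (u - cpt d) ≤ ro2 d := by
  by_contra hcon
  push_neg at hcon
  have hro2 := ro2_pos hd
  have hri2 := ri2_pos hd
  have hrm2 := rm2_pos hd
  obtain ⟨x, hx⟩ : ∃ x : V d, x = u - cpt d := ⟨_, rfl⟩
  obtain ⟨a, ha⟩ : ∃ a : ℝ, a = ip x x := ⟨_, rfl⟩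
  rw [← hx] at hcon
  have hapos : 0 < a := by rw [ha]; linarith
  obtain ⟨s, hs⟩ : ∃ s : ℝ, s = Real.sqrt (ri2 d / a) := ⟨_, rfl⟩
  have hs_nonneg : 0 ≤ s := by rw [hs]; exact Real.sqrt_nonneg _
  have hs_sq : s^2 = ri2 d / a := by
    rw [hs, Real.sq_sqrt (by positivity)]
  obtain ⟨m, hm⟩ : ∃ m : V d, m = cpt d - s • x := ⟨_, rfl⟩
  have hmHs : m ∈ Hs d := by
    show ip m (cpt d) = 1/(d^2:ℝ)
    rw [hm, ip_sub_left, ip_smul_left, hx, ip_center_cpt hd hu.1, ip_cpt_cpt hd]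
    ring
  have hmc : m - cpt d = -(s • x) := by rw [hm]; abel
  have hmcen : ip (m - cpt d) (m - cpt d) = ri2 d := by
    rw [hmc]
    rw [show ip (-(s • x)) (-(s • x)) = s^2 * ip x x by
      simp only [ip, inner_neg_neg, real_inner_smul_left, real_inner_smul_right]; ring]
    rw [← ha, hs_sq]
    field_simp
  have hmin : m ∈ inBall d := by
    refine ⟨hmHs, ?_⟩
    rw [ip_norm_sq, hmcen]
    exact le_of_eq rfl
  have hmem : m ∈ M := hM.2.1 (Or.inl hmin)
  have hlow := hu.2 m hmem
  have hcen : ip u m - 1/(d:ℝ)^2 = -(s*a) := by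
    rw [← ip_center hd hu.1 hmHs, ← hx, hmc]
    rw [show ip x (-(s • x)) = -(s * ip x x) by
      simp only [ip, inner_neg_right, real_inner_smul_right]]
    rw [ha]
  have h1 : s*a ≤ rm2 d := by
    have := lb_eq hd
    linarith
  have h2 : (s*a)^2 = ri2 d * a := by
    rw [mul_pow, hs_sq]
    field_simp
  have h3 : ri2 d * a ≤ (rm2 d)^2 := by
    rw [← h2]
    nlinarith [mul_nonneg hs_nonneg hapos.le]
  rw [← ri2_mul_ro2 hd] at h3
  have h4 : a ≤ ro2 d := le_of_mul_le_mul_left h3 hri2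
  rw [ha] at h4
  linarith

/-- The 𝒢-orbit of a polar point stays inside the simplex. -/
lemma polar_mvec_simplex (hd : 2 ≤ d) (hst : IsStochasticSubgroup d 𝒢) {M : Set (V d)}
    (hM : M ∈ Fam d 𝒢) {R : OG d} (hR : R ∈ 𝒢) {u : V d} (hu : u ∈ polar d M) :
    mvec d (R : Mx d) u ∈ probSimplex d := by
  have hD := D_two hd
  have hHs : mvec d (R : Mx d) u ∈ Hs d := sg_hs hd hst hR hu.1
  refine ⟨hHs, fun k => ?_⟩
  have hm : mvec d ((R⁻¹ : OG d) : Mx d) (basisDist d k) ∈ M :=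
    hM.2.1 (Or.inr ⟨R⁻¹, inv_mem hR, k, rfl⟩)
  have h1 := hu.2 _ hm
  have h2 : ip (mvec d (R : Mx d) u) (basisDist d k)
      = ip u (mvec d ((R⁻¹ : OG d) : Mx d) (basisDist d k)) := ip_mvec_inv R u _
  have h3 : ip (basisDist d k) (mvec d (R : Mx d) u)
      = (mvec d (R : Mx d) u k + 1/(d:ℝ)) / ((d:ℝ)+1) := ip_e hd hHs k
  rw [ip_comm] at h3
  rw [h2] at h3
  have h4 : 1/((d:ℝ)*((d:ℝ)+1)) ≤ (mvec d (R : Mx d) u k + 1/(d:ℝ)) / ((d:ℝ)+1) := by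
    rw [← h3]; exact h1
  have hDpos : (0:ℝ) < (d:ℝ) := by linarith
  rw [div_le_div_iff₀ (by nlinarith) (by nlinarith)] at h4
  have he : (1/(d:ℝ))*((d:ℝ)*((d:ℝ)+1)) = (d:ℝ)+1 := by field_simp
  by_contra hneg
  push_neg at hneg
  nlinarith [mul_lt_mul_of_pos_right hneg (show (0:ℝ) < (d:ℝ)*((d:ℝ)+1) by nlinarith), he, h4]

end PolarFacts
/-! ### The extension lemma -/

section Extension

variable {d : ℕ} {𝒢 : Subgroup (OG d)}

lemma ip_mvec_pair (R S : OG d) (u v : V d) :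
    ip (mvec d (R : Mx d) u) (mvec d (S : Mx d) v)
      = ip u (mvec d ((R⁻¹*S : OG d) : Mx d) v) := by
  rw [ip_mvec_inv, mvec_mvec, og_mul_coe]

lemma shift_mem_Hs (hd : 2 ≤ d) {x : V d} (hxc : ip x (cpt d) = 0) (t : ℝ) :
    cpt d + t • x ∈ Hs d := by
  show ip (cpt d + t • x) (cpt d) = 1/(d^2:ℝ)
  rw [ip_add_left, ip_smul_left, hxc, ip_cpt_cpt hd]
  ring

lemma ip_shift_shift (hd : 2 ≤ d) {x y : V d} (hxc : ip x (cpt d) = 0)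
    (hyc : ip y (cpt d) = 0) (s t : ℝ) :
    ip (cpt d + s • x) (cpt d + t • y) = 1/(d:ℝ)^2 + (s*t) * ip x y := by
  rw [ip_add_left, ip_add_right, ip_add_right, ip_smul_left, ip_smul_left, ip_smul_right,
    ip_smul_right, ip_cpt_cpt hd, hxc, ip_comm (cpt d) y, hyc]
  ring

lemma shift_apply {t : ℝ} {x : V d} (k : Fin (d^2)) :
    (cpt d + t • x) k = 1/(d:ℝ)^2 + t * x k := rfl

lemma shift_center {t : ℝ} {x : V d} : (cpt d + t • x) - cpt d = t • x := by abel

lemma mem_M_centered (hd : 2 ≤ d) {M : Set (V d)} (hM : M ∈ Fam d 𝒢) {p : V d}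
    (hp : p ∈ M) : ip (p - cpt d) (p - cpt d) ≤ ro2 d := by
  have h1 := (hM.1.2 p hp p hp).2
  have h2 : p ∈ Hs d := (hM.1.1 hp).1
  rw [ip_center hd h2 h2]
  have h3 := ub_eq hd
  linarith

/-- The extension lemma: a polar point whose scaled orbit is self-consistent can be
scaled into a maximal invariant germ. -/
lemma extension (hd : 2 ≤ d) (hst : IsStochasticSubgroup d 𝒢) {M : Set (V d)}
    (hMax : Maximal (· ∈ Fam d 𝒢) M) {u : V d} (hu : u ∈ polar d M) {t : ℝ}
    (ht0 : 0 ≤ t) (ht1 : t ≤ 1)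
    (hpair : ∀ T ∈ 𝒢, -(rm2 d)
      ≤ t^2 * ip (u - cpt d) (mvec d ((T : OG d) : Mx d) (u - cpt d))) :
    cpt d + t • (u - cpt d) ∈ M := by
  have hM : M ∈ Fam d 𝒢 := hMax.1
  have hD := D_two hd
  obtain ⟨x, hx⟩ : ∃ x : V d, x = u - cpt d := ⟨_, rfl⟩
  rw [← hx] at hpair ⊢
  obtain ⟨w, hw⟩ : ∃ w : V d, w = cpt d + t • x := ⟨_, rfl⟩
  rw [← hw]
  have hxc : ip x (cpt d) = 0 := by rw [hx]; exact ip_center_cpt hd hu.1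
  have hx_ro : ip x x ≤ ro2 d := by
    rw [hx]; exact polar_center_le_ro2 hd hst hM hu
  have hx_nonneg : 0 ≤ ip x x := ip_self_nonneg x
  have hwHs : w ∈ Hs d := by rw [hw]; exact shift_mem_Hs hd hxc t
  -- description of orbit points
  have horb : ∀ R : OG d, R ∈ 𝒢 → mvec d (R : Mx d) w
      = cpt d + t • (mvec d (R : Mx d) x) := by
    intro R hR
    rw [hw, mvec_add, sg_cpt hst hR, mvec_smul]
  have horbHs : ∀ R : OG d, R ∈ 𝒢 → mvec d (R : Mx d) w ∈ Hs d := by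
    intro R hR; exact sg_hs hd hst hR hwHs
  have horbxc : ∀ R : OG d, R ∈ 𝒢 → ip (mvec d (R : Mx d) x) (cpt d) = 0 := by
    intro R hR
    rw [hx, ip_mvec_inv, sg_cpt hst (inv_mem hR)]
    exact ip_center_cpt hd hu.1
  have horb_cen : ∀ R : OG d, R ∈ 𝒢 →
      ip (mvec d (R : Mx d) w - cpt d) (mvec d (R : Mx d) w - cpt d) ≤ ro2 d := by
    intro R hR
    rw [horb R hR, shift_center]
    have h1 : ip (t • mvec d (R : Mx d) x) (t • mvec d (R : Mx d) x)
        = t^2 * ip x x := by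
      rw [ip_smul_left, ip_smul_right]
      rw [show ip (mvec d (R : Mx d) x) (mvec d (R : Mx d) x) = ip x x from ip_mvec_mvec R x x]
      ring
    rw [h1]
    nlinarith [mul_le_mul_of_nonneg_right (show t^2 ≤ 1 by nlinarith) hx_nonneg]
  have horb_simplex : ∀ R : OG d, R ∈ 𝒢 → mvec d (R : Mx d) w ∈ probSimplex d := by
    intro R hR
    refine ⟨horbHs R hR, fun k => ?_⟩
    have h1 : mvec d (R : Mx d) x = mvec d (R : Mx d) u - cpt d := by
      rw [hx, ← sg_centered hst hR]
    rw [horb R hR, h1, shift_apply]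
    have h2 := (polar_mvec_simplex hd hst hM hR hu).2 k
    have h3 : (mvec d (R : Mx d) u - cpt d) k = mvec d (R : Mx d) u k - 1/(d:ℝ)^2 := rfl
    rw [h3]
    have h4 : (0:ℝ) ≤ 1/(d:ℝ)^2 := by positivity
    nlinarith
  -- lower bound of orbit points against M
  have horb_M : ∀ R : OG d, R ∈ 𝒢 → ∀ p ∈ M,
      1/((d:ℝ)*((d:ℝ)+1)) ≤ ip (mvec d (R : Mx d) w) p := by
    intro R hR p hp
    have hpHs : p ∈ Hs d := (hM.1.1 hp).1
    have hp' : mvec d ((R⁻¹ : OG d) : Mx d) p ∈ M := hM.2.2 R⁻¹ (inv_mem hR) p hp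
    have hp'Hs : mvec d ((R⁻¹ : OG d) : Mx d) p ∈ Hs d := (hM.1.1 hp').1
    have h1 : ip (mvec d (R : Mx d) w) p = ip w (mvec d ((R⁻¹ : OG d) : Mx d) p) :=
      ip_mvec_inv R w p
    rw [h1, hw]
    have h2 : ip (cpt d + t • x) (mvec d ((R⁻¹ : OG d) : Mx d) p)
        = 1/(d:ℝ)^2 + t * ip x (mvec d ((R⁻¹ : OG d) : Mx d) p) := by
      rw [ip_add_left, ip_smul_left, ip_comm (cpt d) _, ip_cpt hp'Hs]
    rw [h2]
    have h3 : ip x (mvec d ((R⁻¹ : OG d) : Mx d) p)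
        = ip u (mvec d ((R⁻¹ : OG d) : Mx d) p) - 1/(d:ℝ)^2 := by
      have ha := ip_center hd hu.1 hp'Hs
      rw [← hx] at ha
      have hb := ip_sub_right x (mvec d ((R⁻¹ : OG d) : Mx d) p) (cpt d)
      rw [ha, hxc] at hb
      linarith
    have h4 := hu.2 _ hp'
    have h5 := lb_eq hd
    have h6 : -(rm2 d) ≤ ip x (mvec d ((R⁻¹ : OG d) : Mx d) p) := by
      rw [h3]; linarith
    have h7 : t * ip x (mvec d ((R⁻¹ : OG d) : Mx d) p) ≥ -(rm2 d) := by
      rcases le_or_gt 0 (ip x (mvec d ((R⁻¹ : OG d) : Mx d) p)) with h | h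
      · nlinarith [rm2_pos hd]
      · nlinarith
    linarith
  -- assemble the new germ
  obtain ⟨Orb, hOrb⟩ : ∃ O : Set (V d), O = {z | ∃ R ∈ 𝒢, z = mvec d (R : Mx d) w} :=
    ⟨_, rfl⟩
  have hself : w ∈ Orb := by
    rw [hOrb]
    exact ⟨1, one_mem 𝒢, by rw [show ((1 : OG d) : Mx d) = (1 : Mx d) from rfl, mvec_one]⟩
  have hM' : M ∪ Orb ∈ Fam d 𝒢 := by
    refine ⟨⟨?_, ?_⟩, fun g hg => Or.inl (hM.2.1 hg), ?_⟩
    · rintro p (hp | hp)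
      · exact hM.1.1 hp
      · rw [hOrb] at hp
        obtain ⟨R, hR, rfl⟩ := hp
        exact horb_simplex R hR
    · have horb_orb : ∀ p ∈ Orb, ∀ q ∈ Orb,
          1/((d:ℝ)*((d:ℝ)+1)) ≤ ip p q ∧ ip p q ≤ 2/((d:ℝ)*((d:ℝ)+1)) := by
        rw [hOrb]
        rintro p ⟨R, hR, rfl⟩ q ⟨S, hS, rfl⟩
        constructor
        · rw [ip_mvec_pair R S w w]
          have hT : (R⁻¹*S : OG d) ∈ 𝒢 := mul_mem (inv_mem hR) hS
          have h1 : mvec d ((R⁻¹*S : OG d) : Mx d) w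
              = cpt d + t • (mvec d ((R⁻¹*S : OG d) : Mx d) x) := horb _ hT
          rw [h1, hw, ip_shift_shift hd hxc (horbxc _ hT)]
          have h2 := hpair _ hT
          have h3 := lb_eq hd
          have h4 : (t*t) = t^2 := by ring
          rw [h4]
          linarith
        · exact pair_ub hd (horbHs R hR) (horbHs S hS) (horb_cen R hR) (horb_cen S hS)
      rintro p (hp | hp) q (hq | hq)
      · exact hM.1.2 p hp q hq
      · -- p ∈ M, q ∈ Orb
        rw [hOrb] at hq
        obtain ⟨S, hS, rfl⟩ := hq
        constructor
        · rw [ip_comm]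
          exact horb_M S hS p hp
        · exact pair_ub hd (hM.1.1 hp).1 (horbHs S hS) (mem_M_centered hd hM hp)
            (horb_cen S hS)
      · rw [hOrb] at hp
        obtain ⟨S, hS, rfl⟩ := hp
        constructor
        · exact horb_M S hS q hq
        · exact pair_ub hd (horbHs S hS) (hM.1.1 hq).1 (horb_cen S hS)
            (mem_M_centered hd hM hq)
      · exact horb_orb p hp q hq
    · rintro R hR p (hp | hp)
      · exact Or.inl (hM.2.2 R hR p hp)
      · right
        rw [hOrb] at hp ⊢
        obtain ⟨S, hS, rfl⟩ := hp
        exact ⟨R*S, mul_mem hR hS, by rw [mvec_mvec, og_mul_coe]⟩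
  have heq : M = M ∪ Orb := hMax.eq_of_subset hM' Set.subset_union_left
  rw [heq]
  exact Or.inr hself

end Extension
/-! ### Zorn's lemma and the main argument -/

section Main

variable {d : ℕ} {𝒢 : Subgroup (OG d)}

lemma exists_maximal (hd : 2 ≤ d) (hst : IsStochasticSubgroup d 𝒢) :
    ∃ M, G0 d 𝒢 ⊆ M ∧ Maximal (· ∈ Fam d 𝒢) M := by
  apply zorn_subset_nonempty
  · intro C hC hchain hne
    refine ⟨⋃₀ C, ⟨⟨?_, ?_⟩, ?_, ?_⟩, fun s hs => Set.subset_sUnion_of_mem hs⟩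
    · rintro p ⟨A, hA, hpA⟩
      exact (hC hA).1.1 hpA
    · rintro p ⟨A, hA, hpA⟩ q ⟨B, hB, hqB⟩
      rcases hchain.total hA hB with h | h
      · exact (hC hB).1.2 p (h hpA) q hqB
      · exact (hC hA).1.2 p hpA q (h hqB)
    · obtain ⟨A, hA⟩ := hne
      exact le_trans (hC hA).2.1 (Set.subset_sUnion_of_mem hA)
    · rintro R hR p ⟨A, hA, hpA⟩
      exact ⟨A, hA, (hC hA).2.2 R hR p hpA⟩
  · exact G0_mem_Fam hd hst

set_option maxHeartbeats 1000000 in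
lemma polar_subset (hd : 2 ≤ d) (hst : IsStochasticSubgroup d 𝒢) {M : Set (V d)}
    (hMax : Maximal (· ∈ Fam d 𝒢) M) : polar d M ⊆ M := by
  intro u hu
  have hM : M ∈ Fam d 𝒢 := hMax.1
  have hrm2 := rm2_pos hd
  obtain ⟨x, hx⟩ : ∃ x : V d, x = u - cpt d := ⟨_, rfl⟩
  rcases eq_or_lt_of_le (ip_self_nonneg x) with ha0 | hapos
  · -- u is the barycenter
    have hx0 : x = 0 := ip_self_eq_zero.mp ha0.symm
    have : u = cpt d := by
      have := hx.symm.trans hx0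
      rwa [sub_eq_zero] at this
    rw [this]
    exact hM.2.1 (Or.inl (cpt_mem_inBall hd))
  -- main case
  have hxc : ip x (cpt d) = 0 := by rw [hx]; exact ip_center_cpt hd hu.1
  obtain ⟨S, hSdef⟩ : ∃ S : Set ℝ, S = {t : ℝ | 0 ≤ t ∧ t ≤ 1 ∧ cpt d + t • x ∈ M} :=
    ⟨_, rfl⟩
  have haddmem : ∀ t : ℝ, 0 ≤ t → t ≤ 1 →
      (∀ T ∈ 𝒢, -(rm2 d) ≤ t^2 * ip x (mvec d ((T : OG d) : Mx d) x)) → t ∈ S := by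
    intro t h0 h1 hp
    rw [hSdef]
    refine ⟨h0, h1, ?_⟩
    have hext := extension hd hst hMax hu h0 h1 (by rw [← hx]; exact hp)
    rwa [← hx] at hext
  have hCS : ∀ T ∈ 𝒢, -(ip x x) ≤ ip x (mvec d ((T : OG d) : Mx d) x) := by
    intro T hT
    have h1 : ip (mvec d ((T : OG d) : Mx d) x) (mvec d ((T : OG d) : Mx d) x) = ip x x :=
      ip_mvec_mvec T x x
    exact (ip_bounds (le_refl (ip x x)) (le_of_eq h1) (le_of_eq (sq (ip x x)).symm)
      (ip_self_nonneg x)).1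
  -- a first element of S
  obtain ⟨t0, ht0def⟩ : ∃ t0 : ℝ, t0 = min 1 (Real.sqrt (rm2 d / ip x x)) := ⟨_, rfl⟩
  have ht0pos : 0 < t0 := by
    rw [ht0def]
    exact lt_min one_pos (Real.sqrt_pos.mpr (by positivity))
  have ht0le : t0 ≤ 1 := by rw [ht0def]; exact min_le_left _ _
  have ht0sq : t0^2 * ip x x ≤ rm2 d := by
    have hs1 : t0 ≤ Real.sqrt (rm2 d / ip x x) := by rw [ht0def]; exact min_le_right _ _
    have hs2 : t0^2 ≤ rm2 d / ip x x := by
      have h3 := Real.sq_sqrt (show (0:ℝ) ≤ rm2 d / ip x x by positivity)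
      nlinarith [Real.sqrt_nonneg (rm2 d / ip x x), ht0pos.le]
    calc t0^2 * ip x x ≤ (rm2 d / ip x x) * ip x x :=
        mul_le_mul_of_nonneg_right hs2 (ip_self_nonneg x)
    _ = rm2 d := by field_simp
  have ht0S : t0 ∈ S := by
    apply haddmem t0 ht0pos.le ht0le
    intro T hT
    have h1 := mul_le_mul_of_nonneg_left (hCS T hT) (sq_nonneg t0)
    nlinarith [h1]
  have hSne : S.Nonempty := ⟨t0, ht0S⟩
  have hSbdd : BddAbove S := by
    refine ⟨1, fun t ht => ?_⟩
    rw [hSdef] at ht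
    exact ht.2.1
  obtain ⟨τ, hτdef⟩ : ∃ τ : ℝ, τ = sSup S := ⟨_, rfl⟩
  have hτub : τ ≤ 1 := by
    rw [hτdef]
    apply csSup_le hSne
    intro t ht; rw [hSdef] at ht; exact ht.2.1
  have hτlb : t0 ≤ τ := by rw [hτdef]; exact le_csSup hSbdd ht0S
  have hτpos : 0 < τ := lt_of_lt_of_le ht0pos hτlb
  -- the supremum bound
  have hBnd : ∀ T ∈ 𝒢, -(rm2 d) ≤ τ * ip x (mvec d ((T : OG d) : Mx d) x) := by
    intro T hT
    have hstep : ∀ t ∈ S, -(rm2 d) ≤ t * ip x (mvec d ((T : OG d) : Mx d) x) := by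
      intro t ht
      rw [hSdef] at ht
      obtain ⟨ht0', ht1', hmem⟩ := ht
      have hTu : mvec d ((T : OG d) : Mx d) u ∈ polar d M :=
        polar_invariant hd hst hM hT hu
      have hlow := hTu.2 _ hmem
      have hTxc : ip (mvec d ((T : OG d) : Mx d) x) (cpt d) = 0 := by
        rw [hx, ip_mvec_inv, sg_cpt hst (inv_mem hT)]
        exact ip_center_cpt hd hu.1
      have h8 := sg_centered hst hT u
      rw [← hx] at h8
      have h9 : mvec d ((T : OG d) : Mx d) u
          = cpt d + (1:ℝ) • mvec d ((T : OG d) : Mx d) x := by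
        rw [one_smul, ← h8]; abel
      rw [h9, ip_shift_shift hd hTxc hxc 1 t] at hlow
      have h10 := lb_eq hd
      have h11 : ip (mvec d ((T : OG d) : Mx d) x) x
          = ip x (mvec d ((T : OG d) : Mx d) x) := ip_comm _ _
      rw [h11] at hlow
      linarith
    rcases le_or_gt 0 (ip x (mvec d ((T : OG d) : Mx d) x)) with hpos | hneg2
    · nlinarith [mul_nonneg hτpos.le hpos]
    · have hub : ∀ t ∈ S, t ≤ rm2 d / (-(ip x (mvec d ((T : OG d) : Mx d) x))) := by
        intro t ht
        have h12 := hstep t ht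
        rw [le_div_iff₀ (by linarith)]
        nlinarith
      have h13 : τ ≤ rm2 d / (-(ip x (mvec d ((T : OG d) : Mx d) x))) := by
        rw [hτdef]; exact csSup_le hSne hub
      rw [le_div_iff₀ (by linarith)] at h13
      nlinarith
  -- the supremum is 1
  have hτ1 : τ = 1 := by
    by_contra hne
    have hτlt : τ < 1 := lt_of_le_of_ne hτub hne
    obtain ⟨t', ht'def⟩ : ∃ t' : ℝ, t' = min 1 (Real.sqrt τ) := ⟨_, rfl⟩
    have ht'0 : 0 ≤ t' := by
      rw [ht'def]; exact le_min zero_le_one (Real.sqrt_nonneg _)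
    have ht'1 : t' ≤ 1 := by rw [ht'def]; exact min_le_left _ _
    have ht'sq : t'^2 ≤ τ := by
      have hs1 : t' ≤ Real.sqrt τ := by rw [ht'def]; exact min_le_right _ _
      have h3 := Real.sq_sqrt hτpos.le
      nlinarith [Real.sqrt_nonneg τ]
    have ht'S : t' ∈ S := by
      apply haddmem t' ht'0 ht'1
      intro T hT
      have hB := hBnd T hT
      rcases le_or_gt 0 (ip x (mvec d ((T : OG d) : Mx d) x)) with hpos | hneg2
      · nlinarith [mul_nonneg (sq_nonneg t') hpos, rm2_pos hd]
      · have h14 : τ * ip x (mvec d ((T : OG d) : Mx d) x)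
            ≤ t'^2 * ip x (mvec d ((T : OG d) : Mx d) x) :=
          mul_le_mul_of_nonpos_right ht'sq hneg2.le
        linarith
    have hle : t' ≤ τ := by rw [hτdef]; exact le_csSup hSbdd ht'S
    have hgt : τ < t' := by
      rw [ht'def]
      apply lt_min hτlt
      rw [Real.lt_sqrt hτpos.le]
      nlinarith
    linarith
  -- conclude
  have hfin : ∀ T ∈ 𝒢, -(rm2 d) ≤ (1:ℝ)^2 * ip x (mvec d ((T : OG d) : Mx d) x) := by
    intro T hT
    have h20 := hBnd T hT
    rw [hτ1, one_mul] at h20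
    rw [one_pow, one_mul]
    exact h20
  have h1S : (1:ℝ) ∈ S := haddmem 1 zero_le_one le_rfl hfin
  rw [hSdef] at h1S
  have := h1S.2.2
  rw [one_smul, hx] at this
  rwa [show cpt d + (u - cpt d) = u by abel] at this

end Main

/-- every stochastic subgroup of O(d²) is contained in the
preservation group of some qplex. -/
theorem statement17 (d : ℕ) (hd : 2 ≤ d)
    (𝒢 : Subgroup (Matrix.orthogonalGroup (Fin (d^2)) ℝ))
    (hst : IsStochasticSubgroup d 𝒢) :
    ∃ Q : Set (V d), IsQplex d Q ∧
      ∀ R ∈ 𝒢, mvec d (R : Matrix (Fin (d^2)) (Fin (d^2)) ℝ) '' Q = Q := by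
  obtain ⟨M, hG0M, hMax⟩ := exists_maximal hd hst
  have hM : M ∈ Fam d 𝒢 := hMax.1
  refine ⟨M, ⟨?_, ?_⟩, ?_⟩
  · intro q hq
    exact ⟨hM.1.1 hq, ⟨(hM.1.1 hq).1, (hM.1.2 q hq q hq).2⟩⟩
  · apply Set.Subset.antisymm
    · intro q hq
      exact ⟨(hM.1.1 hq).1, fun v hv => (hM.1.2 q hq v hv).1⟩
    · exact polar_subset hd hst hMax
  · intro R hR
    apply Set.Subset.antisymm
    · rintro z ⟨q, hq, rfl⟩
      exact hM.2.2 R hR q hq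
    · intro q hq
      refine ⟨mvec d ((R⁻¹ : OG d) : Mx d) q, hM.2.2 R⁻¹ (inv_mem hR) q hq, ?_⟩
      rw [mvec_mvec, og_inv_coe, og_mul_self_star, mvec_one]
end
end
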